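/- Let X ⊆ ℝ^D be a finite set with n ≥ 2 elements, let Y ⊆ ℝ^D be a finite nonempty set disjoint from X, set δ = min{κ(Y), d_E(X,Y)}, and let ε_* = min{ε > 0 : the ε-graph G_ε(X) is connected}. Assume δ > ε_* (i.e., Y is a set of geometric outliers) and let p > 1 satisfy (δ/ε_*)^p > n. Then the diameter of (X, d_{X,p}) is strictly less than δ^p, and consequently d_{X∪Y,p}(x,x') = d_{X,p}(x,x') for all x, x' ∈ X. -/

import Mathlib

/-- The cost of a polygonal path given by the list `l` of its vertices:
the sum over consecutive pairs of the `p`-th power of the Euclidean distance. -/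
noncomputable def chainCost {D : ℕ} (p : ℝ) (l : List (EuclideanSpace ℝ (Fin D))) : ℝ :=
  ((l.zip l.tail).map (fun q => dist q.1 q.2 ^ p)).sum

/-- The sample Fermat distance: `d_{S,p}(x,y)` is the infimum over all finite paths
`x = x₀, x₁, …, x_{r+1} = y` with interior points `x₁,…,x_r ∈ S` of
`Σ_{i=0}^{r} |x_{i+1} − x_i|^p`. -/
noncomputable def fermatDist {D : ℕ} (p : ℝ) (S : Finset (EuclideanSpace ℝ (Fin D)))
    (x y : EuclideanSpace ℝ (Fin D)) : ℝ :=
  sInf {c : ℝ | ∃ l : List (EuclideanSpace ℝ (Fin D)),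
    (∀ z ∈ l, z ∈ S) ∧ c = chainCost p (x :: (l ++ [y]))}

/-- The Euclidean distance `d_E(A,B) = min_{a ∈ A, b ∈ B} |a − b|` between finite sets. -/
noncomputable def setDistE {D : ℕ} (A B : Finset (EuclideanSpace ℝ (Fin D))) : ℝ :=
  sInf {d : ℝ | ∃ a ∈ A, ∃ b ∈ B, d = dist a b}

/-- The minimal spacing `κ(B) = min_{b ∈ B} d_E({b}, B∖{b})` of a finite set. -/
noncomputable def minSpacing {D : ℕ} (B : Finset (EuclideanSpace ℝ (Fin D))) : ℝ :=
  sInf {d : ℝ | ∃ b ∈ B, ∃ b' ∈ B, b ≠ b' ∧ d = dist b b'}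
noncomputable instance {D : ℕ} : DecidableEq (EuclideanSpace ℝ (Fin D)) := Classical.decEq _

/-- The `ε`-graph on a finite set `S ⊆ ℝ^D`: vertices are the points of `S`, with an edge
between distinct `u, v` whenever `|u − v| ≤ ε`. -/
def epsGraph {D : ℕ} (ε : ℝ) (S : Finset (EuclideanSpace ℝ (Fin D))) : SimpleGraph ↥S :=
  SimpleGraph.fromRel (fun u v => dist (u : EuclideanSpace ℝ (Fin D)) v ≤ ε)

/-- The minimal `ε > 0` for which the `ε`-graph on `S` is connected. -/
noncomputable def epsStar {D : ℕ} (S : Finset (EuclideanSpace ℝ (Fin D))) : ℝ :=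
  sInf {ε : ℝ | 0 < ε ∧ (epsGraph ε S).Connected}


lemma chainCost_pair {D : ℕ} (p : ℝ) (u v : EuclideanSpace ℝ (Fin D)) :
    chainCost p [u, v] = dist u v ^ p := by simp [chainCost]

lemma chainCost_cons_cons {D : ℕ} (p : ℝ) (u v : EuclideanSpace ℝ (Fin D))
    (l : List (EuclideanSpace ℝ (Fin D))) :
    chainCost p (u :: v :: l) = dist u v ^ p + chainCost p (v :: l) := by
  simp [chainCost]

lemma chainCost_nonneg {D : ℕ} (p : ℝ) (l : List (EuclideanSpace ℝ (Fin D))) :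
    0 ≤ chainCost p l := by
  apply List.sum_nonneg
  intro x hx
  simp only [List.mem_map] at hx
  obtain ⟨q, -, rfl⟩ := hx
  exact Real.rpow_nonneg dist_nonneg p

lemma walk_chain {D : ℕ} (p ε : ℝ) (hp : 0 < p)
    (X : Finset (EuclideanSpace ℝ (Fin D))) :
    ∀ {a b : ↥X} (w : (epsGraph ε X).Walk a b),
      ∃ l : List (EuclideanSpace ℝ (Fin D)), (∀ z ∈ l, z ∈ X) ∧
        chainCost p ((a : EuclideanSpace ℝ (Fin D)) :: (l ++ [(b : EuclideanSpace ℝ (Fin D))]))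
          ≤ w.length * ε ^ p := by
  intro a b w
  induction w with
  | nil =>
    refine ⟨[], by simp, ?_⟩
    simp [chainCost_pair, Real.zero_rpow hp.ne']
  | @cons u v c h w ih =>
    obtain ⟨l, hl, hcost⟩ := ih
    refine ⟨(v : EuclideanSpace ℝ (Fin D)) :: l, ?_, ?_⟩
    · intro z hz
      rcases List.mem_cons.1 hz with rfl | hz
      · exact v.2
      · exact hl z hz
    · have hadj : dist (u : EuclideanSpace ℝ (Fin D)) v ≤ ε := by
        simp only [epsGraph, SimpleGraph.fromRel_adj] at h
        rcases h.2 with h' | h'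
        · exact h'
        · rwa [dist_comm]
      have h1 : dist (u : EuclideanSpace ℝ (Fin D)) v ^ p ≤ ε ^ p :=
        Real.rpow_le_rpow dist_nonneg hadj hp.le
      rw [List.cons_append, chainCost_cons_cons]
      push_cast [SimpleGraph.Walk.length_cons]
      linarith

/-- If a chain starting in `X` contains a point of `Y`, and every `X`-`Y` distance
is at least `δ ≥ 0`, then its cost is at least `δ ^ p`. -/
lemma cross_cost {D : ℕ} (p δ : ℝ) (hδ : 0 ≤ δ) (hp : 0 ≤ p)
    (X Y : Finset (EuclideanSpace ℝ (Fin D)))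
    (hXY : ∀ a ∈ X, ∀ b ∈ Y, δ ≤ dist a b) :
    ∀ (l : List (EuclideanSpace ℝ (Fin D))) (a : EuclideanSpace ℝ (Fin D)), a ∈ X →
      (∀ z ∈ l, z ∈ X ∨ z ∈ Y) → (∃ z ∈ l, z ∈ Y) →
      δ ^ p ≤ chainCost p (a :: l) := by
  intro l
  induction l with
  | nil => intro a _ _ hz; simp at hz
  | cons b t ih =>
    intro a ha hall hz
    rw [chainCost_cons_cons]
    by_cases hbY : b ∈ Y
    · have h1 : δ ^ p ≤ dist a b ^ p :=
        Real.rpow_le_rpow hδ (hXY a ha b hbY) hp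
      have h2 := chainCost_nonneg p (b :: t)
      linarith
    · have hbX : b ∈ X := by
        rcases hall b (List.mem_cons_self) with h | h
        · exact h
        · exact absurd h hbY
      have hz' : ∃ z ∈ t, z ∈ Y := by
        obtain ⟨z, hzl, hzY⟩ := hz
        rcases List.mem_cons.1 hzl with rfl | hzt
        · exact absurd hzY hbY
        · exact ⟨z, hzt, hzY⟩
      have h1 := ih b hbX (fun z hz => hall z (List.mem_cons_of_mem _ hz)) hz'
      have h2 : (0:ℝ) ≤ dist a b ^ p := Real.rpow_nonneg dist_nonneg p
      linarith

/-- if `Y` is a set of geometric outliers for the `n`-point sample `X`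
(that is, `δ = min{κ(Y), d_E(X,Y)} > ε_*`, the connectivity threshold of `X`) and `p > 1`
satisfies `(δ/ε_*)^p > n`, then the diameter of `(X, d_{X,p})` is strictly less than
`δ^p`, and consequently `d_{X∪Y,p} = d_{X,p}` on `X × X`. -/
theorem fermatDist_outliers_diam {D : ℕ} (p : ℝ) (hp : 1 < p)
    (X Y : Finset (EuclideanSpace ℝ (Fin D)))
    (hcard : 2 ≤ X.card) (hY : Y.Nonempty) (hdisj : Disjoint X Y)
    (hout : epsStar X < min (minSpacing Y) (setDistE X Y))
    (hpow : (X.card : ℝ) < (min (minSpacing Y) (setDistE X Y) / epsStar X) ^ p) :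
    (∀ x ∈ X, ∀ x' ∈ X,
        fermatDist p X x x' < min (minSpacing Y) (setDistE X Y) ^ p) ∧
    (∀ x ∈ X, ∀ x' ∈ X,
        fermatDist p (X ∪ Y) x x' = fermatDist p X x x') := by
  set δ := min (minSpacing Y) (setDistE X Y) with hδdef
  have hp0 : (0:ℝ) < p := lt_trans one_pos hp
  have hn2 : (2:ℝ) ≤ (X.card : ℝ) := by exact_mod_cast hcard
  have hnpos : (0:ℝ) < (X.card : ℝ) := by linarith
  -- epsStar X is positive
  have he0 : 0 ≤ epsStar X := Real.sInf_nonneg (fun x hx => hx.1.le)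
  have hepos : 0 < epsStar X := by
    rcases he0.lt_or_eq with h | h
    · exact h
    · exfalso
      rw [← h, div_zero, Real.zero_rpow hp0.ne'] at hpow
      linarith
  have hδpos : 0 < δ := hepos.trans hout
  -- the connectivity set is nonempty
  have hSne : {ε : ℝ | 0 < ε ∧ (epsGraph ε X).Connected}.Nonempty := by
    by_contra h
    rw [Set.not_nonempty_iff_eq_empty] at h
    have : epsStar X = 0 := by rw [epsStar, h, Real.sInf_empty]
    linarith
  -- choose ε in the set with card * ε^p < δ^p
  have hβpos : (0:ℝ) < (X.card : ℝ) ^ p⁻¹ := Real.rpow_pos_of_pos hnpos _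
  have hβ : epsStar X < δ / (X.card : ℝ) ^ p⁻¹ := by
    have h1 : ((X.card : ℝ)) ^ p⁻¹ < ((δ / epsStar X) ^ p) ^ p⁻¹ :=
      Real.rpow_lt_rpow hnpos.le hpow (by positivity)
    rw [Real.rpow_rpow_inv (by positivity) hp0.ne'] at h1
    rw [lt_div_iff₀ hβpos]
    calc epsStar X * (X.card : ℝ) ^ p⁻¹
        < epsStar X * (δ / epsStar X) := by
          exact mul_lt_mul_of_pos_left h1 hepos
      _ = δ := by field_simp
  obtain ⟨ε, hεS, hεβ⟩ := exists_lt_of_csInf_lt hSne hβ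
  obtain ⟨hεpos, hconn⟩ := hεS
  have hεppos : (0:ℝ) < ε ^ p := Real.rpow_pos_of_pos hεpos _
  have hkey : (X.card : ℝ) * ε ^ p < δ ^ p := by
    have h1 : ε * (X.card : ℝ) ^ p⁻¹ < δ := by
      rw [lt_div_iff₀ hβpos] at hεβ; exact hεβ
    have h2 : (ε * (X.card : ℝ) ^ p⁻¹) ^ p < δ ^ p :=
      Real.rpow_lt_rpow (by positivity) h1 hp0
    rw [Real.mul_rpow hεpos.le hβpos.le, Real.rpow_inv_rpow hnpos.le hp0.ne'] at h2
    linarith [h2]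
  -- lower bound on X-Y distances
  have hXYdist : ∀ a ∈ X, ∀ b ∈ Y, δ ≤ dist a b := by
    intro a ha b hb
    have h1 : setDistE X Y ≤ dist a b := by
      apply csInf_le
      · exact ⟨0, by rintro d ⟨a', -, b', -, rfl⟩; exact dist_nonneg⟩
      · exact ⟨a, ha, b, hb, rfl⟩
    exact le_trans (min_le_right _ _) h1
  -- cost sets: nonempty and bounded below
  have hbdd : ∀ (S : Finset (EuclideanSpace ℝ (Fin D))) (x x' : EuclideanSpace ℝ (Fin D)),
      BddBelow {c : ℝ | ∃ l : List (EuclideanSpace ℝ (Fin D)),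
        (∀ z ∈ l, z ∈ S) ∧ c = chainCost p (x :: (l ++ [x']))} := by
    intro S x x'
    refine ⟨0, ?_⟩
    rintro c ⟨l, -, rfl⟩
    exact chainCost_nonneg p _
  have hne : ∀ (S : Finset (EuclideanSpace ℝ (Fin D))) (x x' : EuclideanSpace ℝ (Fin D)),
      Set.Nonempty {c : ℝ | ∃ l : List (EuclideanSpace ℝ (Fin D)),
        (∀ z ∈ l, z ∈ S) ∧ c = chainCost p (x :: (l ++ [x']))} := by
    intro S x x'
    exact ⟨chainCost p (x :: ([] ++ [x'])), [], by simp, rfl⟩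
  -- part 1
  have part1 : ∀ x ∈ X, ∀ x' ∈ X, fermatDist p X x x' < δ ^ p := by
    intro x hx x' hx'
    have hreach := hconn.preconnected ⟨x, hx⟩ ⟨x', hx'⟩
    obtain ⟨w⟩ := hreach
    have hpath := w.toPath
    obtain ⟨l, hl, hcost⟩ := walk_chain p ε hp0 X hpath.val
    have hlen : (hpath.val.length : ℝ) < (X.card : ℝ) := by
      have := hpath.property.length_lt
      rw [Fintype.card_coe] at this
      exact_mod_cast this
    have h1 : fermatDist p X x x' ≤ chainCost p (x :: (l ++ [x'])) := by
      apply csInf_le (hbdd X x x')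
      exact ⟨l, hl, rfl⟩
    have h2 : (hpath.val.length : ℝ) * ε ^ p < (X.card : ℝ) * ε ^ p :=
      mul_lt_mul_of_pos_right hlen hεppos
    calc fermatDist p X x x' ≤ chainCost p (x :: (l ++ [x'])) := h1
      _ ≤ hpath.val.length * ε ^ p := hcost
      _ < (X.card : ℝ) * ε ^ p := h2
      _ < δ ^ p := hkey
  refine ⟨part1, ?_⟩
  intro x hx x' hx'
  apply le_antisymm
  · -- inf over larger chain family is smaller
    apply csInf_le_csInf (hbdd (X ∪ Y) x x') (hne X x x')
    rintro c ⟨l, hl, rfl⟩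
    exact ⟨l, fun z hz => Finset.mem_union_left Y (hl z hz), rfl⟩
  · apply le_csInf (hne (X ∪ Y) x x')
    rintro c ⟨l, hl, rfl⟩
    by_cases hY' : ∃ z ∈ l, z ∈ Y
    · have h1 : δ ^ p ≤ chainCost p (x :: (l ++ [x'])) := by
        apply cross_cost p δ hδpos.le hp0.le X Y hXYdist (l ++ [x']) x hx
        · intro z hz
          rcases List.mem_append.1 hz with h | h
          · exact (Finset.mem_union.1 (hl z h))
          · simp at h; subst h; exact Or.inl hx'
        · obtain ⟨z, hz, hzY⟩ := hY'
          exact ⟨z, List.mem_append_left _ hz, hzY⟩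
      linarith [part1 x hx x' hx']
    · push_neg at hY'
      apply csInf_le (hbdd X x x')
      refine ⟨l, fun z hz => ?_, rfl⟩
      rcases Finset.mem_union.1 (hl z hz) with h | h
      · exact h
      · exact absurd h (hY' z hz)
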